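/- Let S₁₁, S₁₂, …, S₁ₙ be bounded operators on a complex Hilbert space H. The numerical radius of the n×n block operator matrix whose first row is (S₁₁, S₁₂, …, S₁ₙ) and all other rows zero is at most (1/2)[w(S₁₁) + √(w(S₁₁)² + ∑_{k=2}^{n} ‖S₁ₖ‖²)]. -/

import Mathlib

noncomputable def numRadius {E : Type*} [NormedAddCommGroup E] [InnerProductSpace ℂ E]
    (T : E →L[ℂ] E) : ℝ :=
  sSup {r : ℝ | ∃ x : E, ‖x‖ = 1 ∧ r = ‖(inner ℂ (T x) x : ℂ)‖}

noncomputable def blockOp {H : Type*} [NormedAddCommGroup H] [InnerProductSpace ℂ H]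
    (n : ℕ) (M : Fin n → Fin n → H →L[ℂ] H) :
    (PiLp 2 fun _ : Fin n => H) →L[ℂ] (PiLp 2 fun _ : Fin n => H) :=
  (PiLp.continuousLinearEquiv 2 ℂ (fun _ : Fin n => H)).symm.toContinuousLinearMap ∘L
    (ContinuousLinearMap.pi fun i => ∑ j, (M i j).comp (ContinuousLinearMap.proj j)) ∘L
    (PiLp.continuousLinearEquiv 2 ℂ (fun _ : Fin n => H)).toContinuousLinearMap

section Aux

variable {E : Type*} [NormedAddCommGroup E] [InnerProductSpace ℂ E]

lemma numSet_bdd (T : E →L[ℂ] E) :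
    ∀ r ∈ {r : ℝ | ∃ x : E, ‖x‖ = 1 ∧ r = ‖(inner ℂ (T x) x : ℂ)‖}, r ≤ ‖T‖ := by
  rintro r ⟨x, hx, rfl⟩
  calc ‖(inner ℂ (T x) x : ℂ)‖ ≤ ‖T x‖ * ‖x‖ := norm_inner_le_norm _ _
    _ ≤ ‖T‖ * ‖x‖ * ‖x‖ := by gcongr; exact T.le_opNorm x
    _ = ‖T‖ := by rw [hx]; ring

lemma numRadius_nonneg (T : E →L[ℂ] E) : 0 ≤ numRadius T :=
  Real.sSup_nonneg (by rintro r ⟨x, hx, rfl⟩; positivity)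

lemma inner_le_numRadius (T : E →L[ℂ] E) (v : E) :
    ‖(inner ℂ (T v) v : ℂ)‖ ≤ numRadius T * ‖v‖ ^ 2 := by
  rcases eq_or_ne v 0 with rfl | hv
  · simp
  have hv' : (0:ℝ) < ‖v‖ := norm_pos_iff.2 hv
  set c : ℂ := ((‖v‖⁻¹ : ℝ) : ℂ) with hc
  have hxn : ‖c • v‖ = 1 := by
    simp [c, norm_smul, abs_of_nonneg (inv_nonneg.2 hv'.le), inv_mul_cancel₀ hv'.ne']
  have hmem : ‖(inner ℂ (T (c • v)) (c • v) : ℂ)‖ ∈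
      {r : ℝ | ∃ x : E, ‖x‖ = 1 ∧ r = ‖(inner ℂ (T x) x : ℂ)‖} := ⟨c • v, hxn, rfl⟩
  have hle : ‖(inner ℂ (T (c • v)) (c • v) : ℂ)‖ ≤ numRadius T :=
    le_csSup ⟨‖T‖, fun r hr => numSet_bdd T r hr⟩ hmem
  have hval : ‖(inner ℂ (T (c • v)) (c • v) : ℂ)‖ = (‖v‖⁻¹)^2 * ‖(inner ℂ (T v) v : ℂ)‖ := by
    rw [map_smul, inner_smul_left, inner_smul_right]
    simp [c, norm_mul, Complex.norm_real]
    ring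
  rw [hval] at hle
  have h2 := mul_le_mul_of_nonneg_right hle (by positivity : (0:ℝ) ≤ ‖v‖ ^ 2)
  calc ‖(inner ℂ (T v) v : ℂ)‖ = (‖v‖⁻¹)^2 * ‖(inner ℂ (T v) v : ℂ)‖ * ‖v‖^2 := by
        field_simp
    _ ≤ _ := h2

lemma blockOp_apply {H : Type*} [NormedAddCommGroup H] [InnerProductSpace ℂ H]
    (n : ℕ) (M : Fin n → Fin n → H →L[ℂ] H) (x : PiLp 2 fun _ : Fin n => H) (i : Fin n) :
    blockOp n M x i = ∑ j, M i j (x j) := by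
  simp [blockOp, ContinuousLinearMap.pi_apply, ContinuousLinearMap.sum_apply]

lemma scalar_ineq (w c a b : ℝ) (hw : 0 ≤ w) (hc : 0 ≤ c) (ha : 0 ≤ a) (hb : 0 ≤ b)
    (hab : a^2 + b^2 = 1) :
    w * a^2 + c * b * a ≤ (1/2) * (w + Real.sqrt (w^2 + c^2)) := by
  set s := Real.sqrt (w^2 + c^2) with hs
  have hs0 : 0 ≤ s := Real.sqrt_nonneg _
  have hs2 : s^2 = w^2 + c^2 := Real.sq_sqrt (by positivity)
  have huv : (a^2-b^2)^2 + (2*a*b)^2 = 1 := by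
    have h := sq_nonneg (a^2+b^2)
    nlinarith [hab]
  have h1 : (w*(a^2-b^2) + c*(2*a*b))^2 ≤ s^2 := by
    have hsq := sq_nonneg (w*(2*a*b) - c*(a^2-b^2))
    have hexp : (w*(a^2-b^2) + c*(2*a*b))^2 + (w*(2*a*b) - c*(a^2-b^2))^2
        = (w^2+c^2) * ((a^2-b^2)^2 + (2*a*b)^2) := by ring
    rw [huv, ← hs2, mul_one] at hexp
    linarith
  have key : w*(a^2-b^2) + c*(2*a*b) ≤ s := by
    calc w*(a^2-b^2) + c*(2*a*b) ≤ |w*(a^2-b^2) + c*(2*a*b)| := le_abs_self _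
      _ = Real.sqrt ((w*(a^2-b^2) + c*(2*a*b))^2) := (Real.sqrt_sq_eq_abs _).symm
      _ ≤ Real.sqrt (s^2) := Real.sqrt_le_sqrt h1
      _ = s := Real.sqrt_sq hs0
  nlinarith [key, hab]

end Aux

variable {H : Type*} [NormedAddCommGroup H] [InnerProductSpace ℂ H]
theorem stmt18 (n : ℕ) [NeZero n] (S : Fin n → H →L[ℂ] H) :
    numRadius (blockOp n (fun i j => if i = 0 then S j else 0)) ≤
      (1 / 2) * (numRadius (S 0) +
        Real.sqrt (numRadius (S 0) ^ 2 +
          ∑ k ∈ Finset.univ.erase (0 : Fin n), ‖S k‖ ^ 2)) := by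
  set w := numRadius (S 0) with hw
  have hw0 : 0 ≤ w := numRadius_nonneg (S 0)
  have hK0 : 0 ≤ ∑ k ∈ Finset.univ.erase (0 : Fin n), ‖S k‖ ^ 2 := by positivity
  rw [numRadius]
  apply Real.sSup_le
  · rintro r ⟨x, hx, rfl⟩
    have happ : ∀ i : Fin n, (blockOp n (fun i j => if i = 0 then S j else 0)) x i
        = if i = 0 then ∑ j, S j (x j) else 0 := by
      intro i
      rw [blockOp_apply]
      split_ifs with h
      · subst h; simp
      · simp [h]
    have hinn : (inner ℂ ((blockOp n (fun i j => if i = 0 then S j else 0)) x) x : ℂ)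
        = ∑ j, inner ℂ (S j (x j)) (x 0) := by
      rw [PiLp.inner_apply]
      rw [Finset.sum_eq_single (0 : Fin n)]
      · rw [happ, if_pos rfl, sum_inner]
      · intro i _ hi; rw [happ, if_neg hi, inner_zero_left]
      · intro h; exact absurd (Finset.mem_univ _) h
    rw [hinn]
    have hnorm : ∑ i, ‖(x : ∀ _ : Fin n, H) i‖^2 = 1 := by
      have h := PiLp.norm_sq_eq_of_L2 (fun _ : Fin n => H) x
      rw [hx] at h; simpa using h.symm
    set a := ‖(x : ∀ _ : Fin n, H) 0‖ with hadef
    have ha : 0 ≤ a := norm_nonneg _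
    set B := ∑ k ∈ Finset.univ.erase (0 : Fin n), ‖(x : ∀ _ : Fin n, H) k‖ ^ 2 with hB
    have hB0 : 0 ≤ B := by positivity
    have hab : a^2 + B = 1 := by
      rw [hB, hadef, ← hnorm]
      exact Finset.add_sum_erase Finset.univ
        (fun i => ‖(x : ∀ _ : Fin n, H) i‖^2) (Finset.mem_univ _)
    set b := Real.sqrt B with hbdef
    have hb : 0 ≤ b := Real.sqrt_nonneg _
    have hb2 : b^2 = B := Real.sq_sqrt hB0
    set c := Real.sqrt (∑ k ∈ Finset.univ.erase (0 : Fin n), ‖S k‖ ^ 2) with hcdef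
    have hc : 0 ≤ c := Real.sqrt_nonneg _
    have step1 : ‖(∑ j, inner ℂ (S j ((x : ∀ _ : Fin n, H) j)) ((x : ∀ _ : Fin n, H) 0) : ℂ)‖
        ≤ w * a^2 + c * b * a := by
      calc ‖(∑ j, inner ℂ (S j ((x : ∀ _ : Fin n, H) j)) ((x : ∀ _ : Fin n, H) 0) : ℂ)‖
          ≤ ∑ j, ‖(inner ℂ (S j ((x : ∀ _ : Fin n, H) j)) ((x : ∀ _ : Fin n, H) 0) : ℂ)‖ :=
            norm_sum_le _ _
        _ = ‖(inner ℂ (S 0 ((x : ∀ _ : Fin n, H) 0)) ((x : ∀ _ : Fin n, H) 0) : ℂ)‖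
            + ∑ j ∈ Finset.univ.erase (0 : Fin n),
              ‖(inner ℂ (S j ((x : ∀ _ : Fin n, H) j)) ((x : ∀ _ : Fin n, H) 0) : ℂ)‖ :=
            (Finset.add_sum_erase _ _ (Finset.mem_univ (0 : Fin n))).symm
        _ ≤ w * a^2 + c * b * a := by
            gcongr ?_ + ?_
            · exact inner_le_numRadius (S 0) _
            · calc ∑ j ∈ Finset.univ.erase (0 : Fin n),
                  ‖(inner ℂ (S j ((x : ∀ _ : Fin n, H) j)) ((x : ∀ _ : Fin n, H) 0) : ℂ)‖
                  ≤ ∑ j ∈ Finset.univ.erase (0 : Fin n),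
                      (‖S j‖ * ‖(x : ∀ _ : Fin n, H) j‖) * a := by
                    apply Finset.sum_le_sum
                    intro j _
                    calc ‖(inner ℂ (S j ((x : ∀ _ : Fin n, H) j)) ((x : ∀ _ : Fin n, H) 0) : ℂ)‖
                        ≤ ‖S j ((x : ∀ _ : Fin n, H) j)‖ * a := norm_inner_le_norm _ _
                      _ ≤ (‖S j‖ * ‖(x : ∀ _ : Fin n, H) j‖) * a := by
                          gcongr; exact (S j).le_opNorm _
                _ = (∑ j ∈ Finset.univ.erase (0 : Fin n),
                      ‖S j‖ * ‖(x : ∀ _ : Fin n, H) j‖) * a := by rw [Finset.sum_mul]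
                _ ≤ (c * b) * a := by
                    gcongr
                    calc ∑ j ∈ Finset.univ.erase (0 : Fin n),
                        ‖S j‖ * ‖(x : ∀ _ : Fin n, H) j‖
                        ≤ Real.sqrt (∑ j ∈ Finset.univ.erase (0 : Fin n), ‖S j‖^2)
                          * Real.sqrt (∑ j ∈ Finset.univ.erase (0 : Fin n),
                              ‖(x : ∀ _ : Fin n, H) j‖^2) :=
                          Real.sum_mul_le_sqrt_mul_sqrt _ _ _
                      _ = c * b := by rw [hcdef, hbdef, hB]
                _ = c * b * a := rfl
    refine step1.trans ?_
    have hfin := scalar_ineq w c a b hw0 hc ha hb (by rw [hb2]; exact hab)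
    rw [hcdef, Real.sq_sqrt hK0] at hfin
    exact hfin
  · positivity
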